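/- Let ε > 0 be small and A > 1/3. Define r_ε = 1 - √(ε/A), and suppose u_ε : (0,1) → ℝ is C², equals u_{D*} on [r_ε, 1), and satisfies 0 < u_ε - u_D < ε, 1 - ε < u_ε'/u_D' < 1, and 1 < u_ε''/u_D'' < 1 + ε on (0,1). Then the metric ds_ε = e^{u_{ε/4}(r)}|dz| has Gaussian curvature satisfying -(1+ε) < κ(ds_ε) < -1/(1+ε) for all sufficiently small ε. Specifically, for each point, the ratio κ(ds_ε)/κ(ds_D) = [(u_{ε/4}'' + u_{ε/4}'/r)/(u_D'' + u_D'/r)]·e^{-2(u_{ε/4}-u_D)} lies strictly between (1-ε/4)e^{-ε/2} > 1/(1+ε) and 1 + ε/4 < 1 + ε. -/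

import Mathlib

lemma deriv_uD_aux (uD : ℝ → ℝ)
    (huD : ∀ r ∈ Set.Ioo (0:ℝ) 1, uD r = Real.log (2 / (1 - r ^ 2)))
    {r : ℝ} (hr : r ∈ Set.Ioo (0:ℝ) 1) :
    deriv uD r = 2 * r / (1 - r ^ 2) := by
  have hne : (1 : ℝ) - r ^ 2 ≠ 0 := by nlinarith [hr.1, hr.2]
  have hev : uD =ᶠ[nhds r] fun x => Real.log 2 - Real.log (1 - x ^ 2) := by
    filter_upwards [isOpen_Ioo.mem_nhds hr] with x hx
    have hx2 : (1 : ℝ) - x ^ 2 ≠ 0 := by nlinarith [hx.1, hx.2]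
    rw [huD x hx, Real.log_div two_ne_zero hx2]
  rw [hev.deriv_eq]
  have h1 : HasDerivAt (fun x : ℝ => 1 - x ^ 2) (-(2 * r)) r := by
    simpa using ((hasDerivAt_pow 2 r).const_sub 1)
  have h2 := (h1.log hne).const_sub (Real.log 2)
  rw [h2.deriv]; field_simp

lemma deriv2_uD_aux (uD : ℝ → ℝ)
    (huD : ∀ r ∈ Set.Ioo (0:ℝ) 1, uD r = Real.log (2 / (1 - r ^ 2)))
    {r : ℝ} (hr : r ∈ Set.Ioo (0:ℝ) 1) :
    deriv (deriv uD) r = (2 + 2 * r ^ 2) / (1 - r ^ 2) ^ 2 := by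
  have hne : (1 : ℝ) - r ^ 2 ≠ 0 := by nlinarith [hr.1, hr.2]
  have hev : deriv uD =ᶠ[nhds r] fun x => 2 * x / (1 - x ^ 2) := by
    filter_upwards [isOpen_Ioo.mem_nhds hr] with x hx
    exact deriv_uD_aux uD huD hx
  rw [hev.deriv_eq]
  have h1 : HasDerivAt (fun x : ℝ => 1 - x ^ 2) (-(2 * r)) r := by
    simpa using ((hasDerivAt_pow 2 r).const_sub 1)
  have h0 : HasDerivAt (fun x : ℝ => 2 * x) 2 r := by
    simpa using (hasDerivAt_id r).const_mul 2
  rw [show (fun x : ℝ => 2 * x / (1 - x ^ 2)) = (fun x => 2 * x) / (fun x => 1 - x ^ 2) from rfl, (h0.div h1 hne).deriv]; field_simp; ring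

lemma eps_step (ε δ : ℝ) (hδdef : δ = ε/4) (hε0 : 0 < ε) (hε5 : ε < 2/5) :
    1 / (1 + ε) ≤ (1 - δ) * Real.exp (-(2 * δ)) := by
  subst hδdef
  have he : 1 - 2 * (ε/4) ≤ Real.exp (-(2 * (ε/4))) := by
    have := Real.add_one_le_exp (-(2 * (ε/4))); linarith
  have h3 : 1 / (1 + ε) ≤ (1 - ε/4) * (1 - 2 * (ε/4)) := by
    rw [div_le_iff₀ (by linarith : (0:ℝ) < 1 + ε)]
    nlinarith [mul_nonneg hε0.le (show (0:ℝ) ≤ 2 - 5*ε + ε^2 by nlinarith [sq_nonneg ε])]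
  have h4 : (1 - ε/4) * (1 - 2 * (ε/4)) ≤ (1 - ε/4) * Real.exp (-(2 * (ε/4))) :=
    mul_le_mul_of_nonneg_left he (by linarith)
  linarith

/-- Pure arithmetic core of the curvature estimate. -/
lemma curv_key (ε δ P Q D1 D2 w c r : ℝ)
    (hδdef : δ = ε / 4) (hε0 : 0 < ε) (hε5 : ε < 2/5) (hr0 : 0 < r)
    (hPpos : 0 < P) (hQpos : 0 < Q)
    (ha0 : (1 - δ) * P < D1) (ha1 : D1 < P)
    (hb0 : Q < D2) (hb1 : D2 < (1 + δ) * Q)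
    (hw0 : 0 < w) (hw1 : w < δ)
    (hc : Real.exp (2 * c) = Q + P / r) :
    -(1 + ε) < -(D2 + D1 / r) * Real.exp (-(2 * (w + c))) ∧
      -(D2 + D1 / r) * Real.exp (-(2 * (w + c))) < -(1 / (1 + ε)) := by
  have hδ0 : 0 < δ := by rw [hδdef]; linarith
  have hε4 : ε = 4 * δ := by rw [hδdef]; ring
  have hδ1 : δ < 1/10 := by linarith
  set S : ℝ := Q + P / r with hS
  have hPr : 0 < P / r := div_pos hPpos hr0
  have hSpos : 0 < S := by rw [hS]; positivity
  set K : ℝ := D2 + D1 / r with hK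
  have hdivlo : (1 - δ) * P / r < D1 / r := div_lt_div_of_pos_right ha0 hr0
  have hdivhi : D1 / r < P / r := div_lt_div_of_pos_right ha1 hr0
  have hKlo : (1 - δ) * S < K := by
    have h1 : (1 - δ) * Q < D2 := by nlinarith
    have h2 : (1 - δ) * (P / r) < D1 / r := by
      have : (1 - δ) * P / r = (1 - δ) * (P / r) := by ring
      linarith [this ▸ hdivlo]
    rw [hK]; have : (1 - δ) * S = (1 - δ) * Q + (1 - δ) * (P / r) := by rw [hS]; ring
    linarith
  have hKhi : K < (1 + δ) * S := by
    have h2 : D1 / r < (1 + δ) * (P / r) := by nlinarith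
    rw [hK]; have : (1 + δ) * S = (1 + δ) * Q + (1 + δ) * (P / r) := by rw [hS]; ring
    linarith
  have hKpos : 0 < K := lt_trans (mul_pos (by linarith) hSpos) hKlo
  have hE : Real.exp (-(2 * (w + c))) = Real.exp (-(2 * w)) / S := by
    rw [← hc, ← Real.exp_sub]; ring_nf
  have hF0 : Real.exp (-(2 * δ)) < Real.exp (-(2 * w)) := by
    apply Real.exp_lt_exp.mpr; linarith
  have hF1 : Real.exp (-(2 * w)) < 1 := by
    rw [← Real.exp_zero]; exact Real.exp_lt_exp.mpr (by linarith)
  have hFpos : 0 < Real.exp (-(2 * w)) := Real.exp_pos _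
  have hKE : K * Real.exp (-(2 * (w + c))) = (K / S) * Real.exp (-(2 * w)) := by
    rw [hE]; field_simp
  have hratlo : 1 - δ < K / S := (lt_div_iff₀ hSpos).mpr (by linarith)
  have hrathi : K / S < 1 + δ := (div_lt_iff₀ hSpos).mpr (by linarith)
  have hKS0 : 0 < K / S := div_pos hKpos hSpos
  have hupper : K * Real.exp (-(2 * (w + c))) < 1 + ε := by
    rw [hKE]
    have t1 : (K / S) * Real.exp (-(2 * w)) < (1 + δ) * Real.exp (-(2 * w)) :=
      mul_lt_mul_of_pos_right hrathi hFpos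
    have t2 : (1 + δ) * Real.exp (-(2 * w)) < (1 + δ) * 1 :=
      mul_lt_mul_of_pos_left hF1 (by linarith)
    nlinarith
  have hlower : 1 / (1 + ε) < K * Real.exp (-(2 * (w + c))) := by
    rw [hKE]
    have t1 : (1 - δ) * Real.exp (-(2 * δ)) < (K / S) * Real.exp (-(2 * δ)) :=
      mul_lt_mul_of_pos_right hratlo (Real.exp_pos _)
    have t2 : (K / S) * Real.exp (-(2 * δ)) < (K / S) * Real.exp (-(2 * w)) :=
      mul_lt_mul_of_pos_left hF0 hKS0
    have step2 : 1 / (1 + ε) ≤ (1 - δ) * Real.exp (-(2 * δ)) :=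
      eps_step ε δ hδdef hε0 hε5
    linarith
  constructor
  · have : -K * Real.exp (-(2 * (w + c))) = -(K * Real.exp (-(2 * (w + c)))) := by ring
    rw [this]; linarith
  · have : -K * Real.exp (-(2 * (w + c))) = -(K * Real.exp (-(2 * (w + c)))) := by ring
    rw [this]
    have : -(K * Real.exp (-(2 * (w + c)))) < -(1 / (1 + ε)) := by linarith
    exact this

theorem stmt_16 (A : ℝ) (hA : A > 1/3) (uD uDstar : ℝ → ℝ)
    (huD : ∀ r ∈ Set.Ioo (0:ℝ) 1, uD r = Real.log (2 / (1 - r ^ 2)))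
    (huDstar : ∀ r ∈ Set.Ioo (0:ℝ) 1,
      uDstar r = -Real.log r - Real.log (-Real.log r))
    (u : ℝ → ℝ → ℝ)
    (hsmooth : ∀ ε ∈ Set.Ioo (0:ℝ) 1, ContDiffOn ℝ 2 (u ε) (Set.Ioo (0:ℝ) 1))
    (hagree : ∀ ε ∈ Set.Ioo (0:ℝ) 1,
      ∀ r ∈ Set.Ico (1 - Real.sqrt (ε / A)) (1:ℝ), u ε r = uDstar r)
    (hsandwich : ∀ ε ∈ Set.Ioo (0:ℝ) 1, ∀ r ∈ Set.Ioo (0:ℝ) 1,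
      (0 < u ε r - uD r ∧ u ε r - uD r < ε) ∧
      (1 - ε < deriv (u ε) r / deriv uD r ∧ deriv (u ε) r / deriv uD r < 1) ∧
      (1 < deriv (deriv (u ε)) r / deriv (deriv uD) r ∧
        deriv (deriv (u ε)) r / deriv (deriv uD) r < 1 + ε)) :
    ∃ ε₀ > (0:ℝ), ∀ ε ∈ Set.Ioo (0:ℝ) ε₀, ∀ r ∈ Set.Ioo (0:ℝ) 1,
      -(1 + ε) <
        -(deriv (deriv (u (ε/4))) r + deriv (u (ε/4)) r / r) *
          Real.exp (-(2 * u (ε/4) r)) ∧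
      -(deriv (deriv (u (ε/4))) r + deriv (u (ε/4)) r / r) *
          Real.exp (-(2 * u (ε/4) r)) < -(1 / (1 + ε)) := by
  refine ⟨2/5, by norm_num, ?_⟩
  intro ε hε r hr
  obtain ⟨hε0, hε5⟩ := hε
  have hδ : ε / 4 ∈ Set.Ioo (0:ℝ) 1 := ⟨by positivity, by linarith⟩
  obtain ⟨⟨hw0, hw1⟩, ⟨ha0, ha1⟩, ⟨hb0, hb1⟩⟩ := hsandwich (ε/4) hδ r hr
  have hr0 := hr.1
  have hr1 := hr.2
  have hs : (0:ℝ) < 1 - r ^ 2 := by nlinarith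
  have hP : deriv uD r = 2 * r / (1 - r ^ 2) := deriv_uD_aux uD huD hr
  have hQ : deriv (deriv uD) r = (2 + 2 * r ^ 2) / (1 - r ^ 2) ^ 2 :=
    deriv2_uD_aux uD huD hr
  have hPpos : 0 < deriv uD r := by rw [hP]; positivity
  have hQpos : 0 < deriv (deriv uD) r := by rw [hQ]; positivity
  -- convert ratio bounds to product bounds
  have hd1lo : (1 - ε/4) * deriv uD r < deriv (u (ε/4)) r := by
    have := mul_lt_mul_of_pos_right ha0 hPpos
    rwa [div_mul_cancel₀ _ (ne_of_gt hPpos)] at this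
  have hd1hi : deriv (u (ε/4)) r < deriv uD r := by
    have := mul_lt_mul_of_pos_right ha1 hPpos
    rwa [div_mul_cancel₀ _ (ne_of_gt hPpos), one_mul] at this
  have hd2lo : deriv (deriv uD) r < deriv (deriv (u (ε/4))) r := by
    have := mul_lt_mul_of_pos_right hb0 hQpos
    rwa [div_mul_cancel₀ _ (ne_of_gt hQpos), one_mul] at this
  have hd2hi : deriv (deriv (u (ε/4))) r < (1 + ε/4) * deriv (deriv uD) r := by
    have := mul_lt_mul_of_pos_right hb1 hQpos
    rwa [div_mul_cancel₀ _ (ne_of_gt hQpos)] at this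
  -- exponential identity
  have hc : Real.exp (2 * uD r) = deriv (deriv uD) r + deriv uD r / r := by
    have h1 : Real.exp (uD r) = 2 / (1 - r ^ 2) := by
      rw [huD r hr]; exact Real.exp_log (by positivity)
    have h2 : Real.exp (2 * uD r) = Real.exp (uD r) ^ 2 := by
      rw [← Real.exp_nat_mul]; norm_num
    rw [h2, h1, hP, hQ]
    field_simp
    ring
  have key := curv_key ε (ε/4) (deriv uD r) (deriv (deriv uD) r)
    (deriv (u (ε/4)) r) (deriv (deriv (u (ε/4))) r) (u (ε/4) r - uD r) (uD r) r
    rfl hε0 hε5 hr0 hPpos hQpos hd1lo hd1hi hd2lo hd2hi hw0 hw1 hc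
  have harg : u (ε/4) r - uD r + uD r = u (ε/4) r := by ring
  rwa [harg] at key
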